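/- If T is a tree of odd order and v is a leaf of T, then σ⁻(T) ≤ σ⁻(T − v). -/
import Mathlib


open SimpleGraph

variable {V : Type*}

/-- The set of "negative" edges of `G` under the parity labeling induced by
the bijection `f : V ≃ Fin (Fintype.card V)`: edges whose endpoint labels
have opposite parity. -/
def negSet [Fintype V] (G : SimpleGraph V) (f : V ≃ Fin (Fintype.card V)) : Set (Sym2 V) :=
  {e ∈ G.edgeSet |
    Sym2.lift ⟨fun u v => ((f u : ℕ) % 2 ≠ (f v : ℕ) % 2), fun u v => propext ne_comm⟩ e}

/-- The number of negative edges under the labeling `f`. -/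
noncomputable def negCount [Fintype V] (G : SimpleGraph V) (f : V ≃ Fin (Fintype.card V)) : ℕ :=
  (negSet G f).ncard

/-- The rna number of `G`: the minimum number of negative edges over all parity labelings. -/
noncomputable def rna [Fintype V] (G : SimpleGraph V) : ℕ :=
  sInf (Set.range (negCount G))

/-- `C(G)`: minimum of `||S₁| − |S₂||` over partitions of the vertex set into two
nonempty parts each inducing a connected subgraph. -/
noncomputable def Cval [Fintype V] (G : SimpleGraph V) : ℕ :=
  sInf {d | ∃ S : Set V, S.Nonempty ∧ Sᶜ.Nonempty ∧ (G.induce S).Connected ∧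
    (G.induce Sᶜ).Connected ∧ d = ((S.ncard : ℤ) - (Sᶜ.ncard : ℤ)).natAbs}

/-- `G` is a star: some center `c` is adjacent exactly to all other vertices,
with no other edges. -/
def IsStar (G : SimpleGraph V) : Prop :=
  ∃ c : V, ∀ a b : V, G.Adj a b ↔ (a ≠ b ∧ (a = c ∨ b = c))

private theorem negCount_key {V : Type*} [Fintype V] [DecidableEq V] (G : SimpleGraph V) (v u : V)
    (hu : G.neighborSet v = {u})
    (f : ↥{w : V | w ≠ v} ≃ Fin (Fintype.card ↥{w : V | w ≠ v}))
    (g : V ≃ Fin (Fintype.card V))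
    (h1 : ∀ a b : {w : V | w ≠ v},
      (((g a : ℕ) % 2 ≠ (g b : ℕ) % 2) ↔ ((f a : ℕ) % 2 ≠ (f b : ℕ) % 2)))
    (h2 : (g v : ℕ) % 2 = (g u : ℕ) % 2) :
    negCount G g ≤ negCount (G.induce {w : V | w ≠ v}) f := by
  have hsub : negSet G g ⊆ Sym2.map Subtype.val '' negSet (G.induce {w : V | w ≠ v}) f := by
    rintro e ⟨he, hneg⟩
    induction e with
    | _ a b =>
      rw [Sym2.lift_mk] at hneg
      rw [mem_edgeSet] at he
      have ha : a ≠ v := by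
        rintro rfl
        have : b ∈ G.neighborSet a := he
        rw [hu, Set.mem_singleton_iff] at this
        subst this
        exact hneg h2
      have hb : b ≠ v := by
        rintro rfl
        have : a ∈ G.neighborSet b := he.symm
        rw [hu, Set.mem_singleton_iff] at this
        subst this
        exact hneg h2.symm
      refine ⟨s(⟨a, ha⟩, ⟨b, hb⟩), ⟨?_, ?_⟩, rfl⟩
      · exact he
      · rw [Sym2.lift_mk]
        exact (h1 ⟨a, ha⟩ ⟨b, hb⟩).mp hneg
  calc negCount G g ≤ (Sym2.map Subtype.val '' negSet (G.induce {w : V | w ≠ v}) f).ncard :=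
        Set.ncard_le_ncard hsub (Set.toFinite _)
    _ = negCount (G.induce {w : V | w ≠ v}) f :=
        Set.ncard_image_of_injective _ (Sym2.map.injective Subtype.val_injective)

/-- If T is a tree of odd order and v a leaf, then σ⁻(T) ≤ σ⁻(T − v). -/
theorem rna_le_of_deleteLeaf {V : Type*} [Fintype V] [DecidableEq V] (G : SimpleGraph V)
    (hodd : Odd (Fintype.card V)) (hT : G.IsTree) (v : V)
    (hleaf : (G.neighborSet v).ncard = 1) :
    rna G ≤ rna (G.induce {w : V | w ≠ v}) := by
  obtain ⟨u, hu⟩ := Set.ncard_eq_one.mp hleaf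
  have huv : u ≠ v := by
    have : u ∈ G.neighborSet v := by rw [hu]; exact rfl
    exact SimpleGraph.Adj.ne' this
  obtain ⟨m, hmdef⟩ : ∃ m, Fintype.card ↥{w : V | w ≠ v} = m := ⟨_, rfl⟩
  have hn : Fintype.card V = m + 1 := by
    rw [← hmdef, ← Fintype.card_option]
    exact Fintype.card_congr (Equiv.optionSubtypeNe v).symm
  have hmeven : m % 2 = 0 := by
    rcases hodd with ⟨k, hk⟩; omega
  have hne : (Set.range (negCount (G.induce {w : V | w ≠ v}))).Nonempty :=
    ⟨_, Set.mem_range_self (Fintype.equivFin _)⟩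
  obtain ⟨f, hf⟩ := Nat.sInf_mem hne
  set f' : ↥{w : V | w ≠ v} ≃ Fin m := f.trans (finCongr hmdef) with hf'def
  have hval : ∀ a : ↥{w : V | w ≠ v}, (f' a : ℕ) = (f a : ℕ) := by
    intro a; simp [hf'def]
  by_cases hp : (f ⟨u, huv⟩ : ℕ) % 2 = 0
  · set g : V ≃ Fin (Fintype.card V) :=
      (Equiv.optionSubtypeNe v).symm.trans
        (f'.optionCongr.trans (finSuccEquivLast.symm.trans (finCongr hn.symm))) with hgdef
    have hgv : (g v : ℕ) = m := by
      simp [hgdef, Equiv.optionSubtypeNe_symm_self]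
    have hgw : ∀ (w : V) (hw : w ≠ v), (g w : ℕ) = (f ⟨w, hw⟩ : ℕ) := by
      intro w hw
      simp [hgdef, Equiv.optionSubtypeNe_symm_of_ne hw, finSuccEquivLast_symm_some]
      exact hval _
    have hgw' : ∀ a : ↥{w : V | w ≠ v}, ((g ↑a : Fin _) : ℕ) = (f a : ℕ) :=
      fun a => hgw ↑a a.2
    have hk := negCount_key G v u hu f g ?_ ?_
    · calc rna G ≤ negCount G g := Nat.sInf_le (Set.mem_range_self g)
        _ ≤ _ := by rw [hf] at hk; exact hk
    · intro a b
      rw [hgw' a, hgw' b]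
    · rw [hgv, hgw u huv]; omega
  · set g : V ≃ Fin (Fintype.card V) :=
      (Equiv.optionSubtypeNe v).symm.trans
        (f'.optionCongr.trans ((finSuccEquiv m).symm.trans (finCongr hn.symm))) with hgdef
    have hgv : (g v : ℕ) = 0 := by
      simp [hgdef, Equiv.optionSubtypeNe_symm_self, finSuccEquiv_symm_none]
    have hgw : ∀ (w : V) (hw : w ≠ v), (g w : ℕ) = (f ⟨w, hw⟩ : ℕ) + 1 := by
      intro w hw
      simp [hgdef, Equiv.optionSubtypeNe_symm_of_ne hw, finSuccEquiv_symm_some,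
        Fin.val_succ]
      exact hval _
    have hgw' : ∀ a : ↥{w : V | w ≠ v}, ((g ↑a : Fin _) : ℕ) = (f a : ℕ) + 1 :=
      fun a => hgw ↑a a.2
    have hk := negCount_key G v u hu f g ?_ ?_
    · calc rna G ≤ negCount G g := Nat.sInf_le (Set.mem_range_self g)
        _ ≤ _ := by rw [hf] at hk; exact hk
    · intro a b
      rw [hgw' a, hgw' b]
      omega
    · rw [hgv, hgw u huv]; omega
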